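/- Let f : ℝ^d → [0,∞) be a lower semi-continuous log-concave function of finite integral with the origin in its support, let ψ* = -log L_∞ f, and let M = min_{ℝ^d} ψ*. Then for any s with the origin interior to supp f_s and s + M > 0, supp L_s f_s ⊆ (1/(M+s)) · closure(supp L_∞ f), where f_s(x) = [max(1 + (log f(x))/s, 0)]^s. -/

import Mathlib

open MeasureTheory Set Pointwise

variable {d : ℕ}

/-- The polar (log-conjugate) transform. -/
noncomputable def polarT (f : EuclideanSpace ℝ (Fin d) → ℝ)
    (y : EuclideanSpace ℝ (Fin d)) : ℝ :=
  ⨅ x : {x : EuclideanSpace ℝ (Fin d) // 0 < f x},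
    Real.exp (-(inner ℝ (x : EuclideanSpace ℝ (Fin d)) y : ℝ)) / f x

/-- The `s`-polar transform. -/
noncomputable def sPolar (s : ℝ) (f : EuclideanSpace ℝ (Fin d) → ℝ)
    (y : EuclideanSpace ℝ (Fin d)) : ℝ :=
  ⨅ x : {x : EuclideanSpace ℝ (Fin d) // 0 < f x},
    max (1 - (inner ℝ (x : EuclideanSpace ℝ (Fin d)) y : ℝ)) 0 ^ s / f x

/-- The `1/s`-concave approximation `f_s = [max(1 + log f / s, 0)]^s` of `f`. -/
noncomputable def sApprox (s : ℝ) (f : EuclideanSpace ℝ (Fin d) → ℝ)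
    (x : EuclideanSpace ℝ (Fin d)) : ℝ :=
  max (1 + Real.log (f x) / s) 0 ^ s

section AuxLemmas

/-- An integrable log-concave function, lsc and positive at 0, is bounded. -/
lemma logconcave_bounded (f : EuclideanSpace ℝ (Fin d) → ℝ)
    (hf : ∀ x, 0 ≤ f x) (hlsc : LowerSemicontinuous f)
    (hlc : ∀ x y : EuclideanSpace ℝ (Fin d), ∀ t ∈ Set.Icc (0 : ℝ) 1,
      f x ^ (1 - t) * f y ^ t ≤ f ((1 - t) • x + t • y))
    (hint : Integrable f) (h0 : 0 < f 0) :
    ∃ C : ℝ, 1 ≤ C ∧ ∀ x, f x ≤ C := by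
  obtain ⟨r, hr, hball⟩ : ∃ r > 0, ∀ u ∈ Metric.ball (0 : EuclideanSpace ℝ (Fin d)) r,
      f 0 / 2 < f u := by
    have h := hlsc 0 (f 0 / 2) (by linarith)
    rw [Metric.eventually_nhds_iff_ball] at h
    obtain ⟨r, hr, h⟩ := h
    exact ⟨r, hr, fun u hu => h u hu⟩
  set v : ℝ := (volume (Metric.ball (0 : EuclideanSpace ℝ (Fin d)) (r/2))).toReal with hv
  have hvpos : 0 < v := by
    rw [hv]
    refine ENNReal.toReal_pos (Metric.measure_ball_pos volume _ (by linarith)).ne' ?_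
    exact (measure_ball_lt_top).ne
  set I : ℝ := ∫ z, f z with hI
  have hkey : ∀ x : EuclideanSpace ℝ (Fin d),
      (f 0 / 2) ^ ((1:ℝ)/2) * f x ^ ((1:ℝ)/2) * v ≤ I := by
    intro x
    have hconst : ∀ z ∈ Metric.ball ((1/2 : ℝ) • x) (r/2),
        (f 0 / 2) ^ ((1:ℝ)/2) * f x ^ ((1:ℝ)/2) ≤ f z := by
      intro z hz
      have hu : (2:ℝ) • z - x ∈ Metric.ball (0 : EuclideanSpace ℝ (Fin d)) r := by
        rw [Metric.mem_ball, dist_eq_norm, sub_zero]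
        have h2 : (2:ℝ) • z - x = (2:ℝ) • (z - (1/2 : ℝ) • x) := by
          rw [smul_sub, smul_smul]; norm_num
        rw [h2, norm_smul]
        rw [Metric.mem_ball, dist_eq_norm] at hz
        simp only [Real.norm_ofNat]
        nlinarith [hz]
      have hcomb : ((1:ℝ) - 1/2) • ((2:ℝ) • z - x) + (1/2 : ℝ) • x = z := by
        module
      have h := hlc ((2:ℝ) • z - x) x (1/2) ⟨by norm_num, by norm_num⟩
      rw [hcomb] at h
      refine le_trans ?_ h
      norm_num
      exact mul_le_mul_of_nonneg_right
        (Real.rpow_le_rpow (by positivity) (hball _ hu).le (by norm_num))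
        (Real.rpow_nonneg (hf x) _)
    have h1 : ((f 0 / 2) ^ ((1:ℝ)/2) * f x ^ ((1:ℝ)/2)) *
        (volume (Metric.ball ((1/2 : ℝ) • x) (r/2))).toReal
        ≤ ∫ z in Metric.ball ((1/2 : ℝ) • x) (r/2), f z := by
      refine setIntegral_ge_of_const_le_real measurableSet_ball (measure_ball_lt_top).ne hconst
        hint.integrableOn
    have h2 : ∫ z in Metric.ball ((1/2 : ℝ) • x) (r/2), f z ≤ I := by
      exact setIntegral_le_integral hint (Filter.Eventually.of_forall hf)
    have h3 : volume (Metric.ball ((1/2 : ℝ) • x) (r/2)) =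
        volume (Metric.ball (0 : EuclideanSpace ℝ (Fin d)) (r/2)) :=
      Measure.addHaar_ball_center volume _ _
    rw [h3] at h1
    exact le_trans h1 h2
  have hc2 : (0:ℝ) < (f 0 / 2) ^ ((1:ℝ)/2) := Real.rpow_pos_of_pos (by linarith) _
  refine ⟨max 1 ((I / ((f 0 / 2) ^ ((1:ℝ)/2) * v)) ^ (2:ℝ)), le_max_left _ _, fun x => ?_⟩
  have h4 : f x ^ ((1:ℝ)/2) ≤ I / ((f 0 / 2) ^ ((1:ℝ)/2) * v) := by
    rw [le_div_iff₀ (by positivity)]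
    calc f x ^ ((1:ℝ)/2) * ((f 0 / 2) ^ ((1:ℝ)/2) * v)
        = (f 0 / 2) ^ ((1:ℝ)/2) * f x ^ ((1:ℝ)/2) * v := by ring
      _ ≤ I := hkey x
  have h5 : f x = (f x ^ ((1:ℝ)/2)) ^ (2:ℝ) := by
    rw [← Real.rpow_mul (hf x)]
    norm_num
  calc f x = (f x ^ ((1:ℝ)/2)) ^ (2:ℝ) := h5
    _ ≤ (I / ((f 0 / 2) ^ ((1:ℝ)/2) * v)) ^ (2:ℝ) := by
        gcongr
        exact Real.rpow_nonneg (hf x) _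
    _ ≤ max 1 ((I / ((f 0 / 2) ^ ((1:ℝ)/2) * v)) ^ (2:ℝ)) := le_max_right _ _

/-- Approximate subgradient of `-log f` at `0` for a log-concave `f` lsc at `0`. -/
lemma exists_eps_subgradient (f : EuclideanSpace ℝ (Fin d) → ℝ)
    (hlsc : LowerSemicontinuous f)
    (hlc : ∀ x y : EuclideanSpace ℝ (Fin d), ∀ t ∈ Set.Icc (0 : ℝ) 1,
      f x ^ (1 - t) * f y ^ t ≤ f ((1 - t) • x + t • y))
    (h0 : 0 < f 0) {ε : ℝ} (hε : 0 < ε) :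
    ∃ w : EuclideanSpace ℝ (Fin d), ∀ x, 0 < f x →
      (inner ℝ x w : ℝ) ≤ -Real.log (f x) + Real.log (f 0) + ε := by
  set ψ0 : ℝ := -Real.log (f 0) with hψ0
  set δ : ℝ := ε / 4 with hδ
  have hδpos : 0 < δ := by positivity
  obtain ⟨r, hr, hball⟩ : ∃ r > 0, ∀ u ∈ Metric.ball (0 : EuclideanSpace ℝ (Fin d)) r,
      f 0 * Real.exp (-δ) < f u := by
    have h := hlsc 0 (f 0 * Real.exp (-δ)) ?_
    · rw [Metric.eventually_nhds_iff_ball] at h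
      obtain ⟨r, hr, h⟩ := h
      exact ⟨r, hr, fun u hu => h u hu⟩
    · nlinarith [Real.exp_lt_one_iff.2 (neg_neg_iff_pos.2 hδpos), Real.exp_pos (-δ)]
  set S : Set ((EuclideanSpace ℝ (Fin d)) × ℝ) :=
    {p | 0 < f p.1 ∧ -Real.log (f p.1) ≤ p.2} with hS
  have hSconv : Convex ℝ S := by
    rintro ⟨x₁, t₁⟩ ⟨hx₁, ht₁⟩ ⟨x₂, t₂⟩ ⟨hx₂, ht₂⟩ a b ha hb hab
    have hcomb := hlc x₁ x₂ b ⟨hb, by linarith⟩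
    have hab' : 1 - b = a := by linarith
    rw [hab'] at hcomb
    have hpos : (0:ℝ) < f x₁ ^ a * f x₂ ^ b :=
      mul_pos (Real.rpow_pos_of_pos hx₁ _) (Real.rpow_pos_of_pos hx₂ _)
    have hmem1 : 0 < f (a • x₁ + b • x₂) := lt_of_lt_of_le hpos hcomb
    refine ⟨by simpa using hmem1, ?_⟩
    have hlog : a * Real.log (f x₁) + b * Real.log (f x₂) ≤ Real.log (f (a • x₁ + b • x₂)) := by
      have := Real.log_le_log hpos hcomb
      rwa [Real.log_mul (Real.rpow_pos_of_pos hx₁ _).ne' (Real.rpow_pos_of_pos hx₂ _).ne',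
        Real.log_rpow hx₁, Real.log_rpow hx₂] at this
    simp only [Prod.smul_mk, Prod.mk_add_mk, smul_eq_mul]
    have h1 : a * t₁ + b * t₂ ≥ a * (-Real.log (f x₁)) + b * (-Real.log (f x₂)) := by
      have := mul_le_mul_of_nonneg_left ht₁ ha
      have := mul_le_mul_of_nonneg_left ht₂ hb
      nlinarith
    have : -Real.log (f (a • x₁ + b • x₂)) ≤ a * (-Real.log (f x₁)) + b * (-Real.log (f x₂)) := by
      nlinarith [hlog]
    exact le_trans this h1
  have hnotin : ((0 : EuclideanSpace ℝ (Fin d)), ψ0 - ε) ∉ closure S := by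
    intro hmem
    have hV : IsOpen ((Metric.ball (0:EuclideanSpace ℝ (Fin d)) r) ×ˢ (Iio (ψ0 - 2*δ))) :=
      Metric.isOpen_ball.prod isOpen_Iio
    have hpt : ((0:EuclideanSpace ℝ (Fin d)), ψ0 - ε)
        ∈ (Metric.ball (0:EuclideanSpace ℝ (Fin d)) r) ×ˢ (Iio (ψ0 - 2*δ)) := by
      refine ⟨Metric.mem_ball_self hr, ?_⟩
      simp only [mem_Iio]
      rw [hδ]; linarith
    obtain ⟨⟨x, t⟩, hq, hqS⟩ := mem_closure_iff_nhds.1 hmem _ (hV.mem_nhds hpt)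
    obtain ⟨hx, ht⟩ := hq
    obtain ⟨hfx, hψx⟩ := hqS
    simp only [mem_Iio] at ht
    have hnx : -x ∈ Metric.ball (0:EuclideanSpace ℝ (Fin d)) r := by
      simpa [Metric.mem_ball, dist_eq_norm, norm_neg] using hx
    have h1 : f 0 * Real.exp (-δ) < f (-x) := hball _ hnx
    have h2 := hlc (-x) x (1/2) ⟨by norm_num, by norm_num⟩
    have hcomb : ((1:ℝ) - 1/2) • (-x) + (1/2 : ℝ) • x = (0:EuclideanSpace ℝ (Fin d)) := by
      module
    rw [hcomb] at h2
    have hfxlow : Real.exp (-t) ≤ f x := by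
      have : -t ≤ Real.log (f x) := by simpa using neg_le_neg hψx
      calc Real.exp (-t) ≤ Real.exp (Real.log (f x)) := Real.exp_le_exp.2 this
        _ = f x := Real.exp_log hfx
    have hchain : (f 0 * Real.exp (-δ)) ^ ((1:ℝ)/2) * (Real.exp (-t)) ^ ((1:ℝ)/2) ≤ f 0 := by
      refine le_trans ?_ h2
      norm_num
      exact mul_le_mul (Real.rpow_le_rpow (by positivity) h1.le (by norm_num))
        (Real.rpow_le_rpow (by positivity) hfxlow (by norm_num))
        (Real.rpow_nonneg (Real.exp_pos _).le _)
        (Real.rpow_nonneg (le_of_lt (lt_of_le_of_lt (by positivity) h1)) _)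
    have hlogchain : (1/2 : ℝ) * (Real.log (f 0) + (-δ)) + (1/2 : ℝ) * (-t) ≤ Real.log (f 0) := by
      have hl := Real.log_le_log (by positivity) hchain
      rwa [Real.log_mul (by positivity) (by positivity), Real.log_rpow (by positivity),
        Real.log_rpow (Real.exp_pos _), Real.log_mul h0.ne' (Real.exp_pos _).ne',
        Real.log_exp, Real.log_exp] at hl
    rw [hψ0] at ht
    linarith
  obtain ⟨g, u, hgS, hgP⟩ :=
    geometric_hahn_banach_closed_point (hSconv.closure) isClosed_closure hnotin
  set α : ℝ := g ((0:EuclideanSpace ℝ (Fin d)), 1) with hα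
  have hgsplit : ∀ x : EuclideanSpace ℝ (Fin d), ∀ t : ℝ, g (x, t) = g (x, 0) + t * α := by
    intro x t
    have : ((x, t) : (EuclideanSpace ℝ (Fin d)) × ℝ)
        = (x, (0:ℝ)) + t • ((0:EuclideanSpace ℝ (Fin d)), (1:ℝ)) := by
      simp [Prod.ext_iff]
    rw [this, map_add, ContinuousLinearMap.map_smul, smul_eq_mul, hα]
  have hg0S : g ((0:EuclideanSpace ℝ (Fin d)), ψ0) < u := hgS _ (subset_closure ⟨h0, le_refl _⟩)
  have hαneg : α < 0 := by
    have h1 : u < g ((0:EuclideanSpace ℝ (Fin d)), ψ0 - ε) := hgP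
    rw [hgsplit 0 (ψ0 - ε)] at h1
    rw [hgsplit 0 ψ0] at hg0S
    nlinarith
  set w : EuclideanSpace ℝ (Fin d) :=
    (-α)⁻¹ • (InnerProductSpace.toDual ℝ (EuclideanSpace ℝ (Fin d))).symm
      (g.comp (ContinuousLinearMap.inl ℝ (EuclideanSpace ℝ (Fin d)) ℝ)) with hw
  refine ⟨w, fun x hx => ?_⟩
  have hgxS : g (x, -Real.log (f x)) < u := hgS _ (subset_closure ⟨hx, le_refl _⟩)
  rw [hgsplit x _] at hgxS
  rw [hgsplit 0 (ψ0 - ε)] at hgP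
  have hg00 : g ((0:EuclideanSpace ℝ (Fin d)), 0) = 0 := by
    have : ((0:EuclideanSpace ℝ (Fin d)), (0:ℝ)) = (0 : (EuclideanSpace ℝ (Fin d)) × ℝ) := rfl
    rw [this, map_zero]
  rw [hg00, zero_add] at hgP
  have hinner : (inner ℝ x w : ℝ) = (-α)⁻¹ * g (x, 0) := by
    rw [hw, real_inner_smul_right]
    congr 1
    rw [real_inner_comm, InnerProductSpace.toDual_symm_apply]
    rfl
  rw [hinner]
  have hβ : 0 < -α := by linarith
  have hineq : g (x, 0) < (-α) * (-Real.log (f x) + Real.log (f 0) + ε) := by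
    have h3 : g (x, 0) < (ψ0 - ε) * α - (-Real.log (f x)) * α := by linarith
    rw [hψ0] at h3
    nlinarith [h3]
  calc (-α)⁻¹ * g (x, 0) ≤ (-α)⁻¹ * ((-α) * (-Real.log (f x) + Real.log (f 0) + ε)) := by
        exact mul_le_mul_of_nonneg_left hineq.le (by positivity)
    _ = -Real.log (f x) + Real.log (f 0) + ε := by
        rw [← mul_assoc, inv_mul_cancel₀ hβ.ne', one_mul]

end AuxLemmas

open Topology

set_option maxHeartbeats 2000000 in
/-- If `M = min ψ*` where `ψ* = -log L_∞ f`, and `s + M > 0` with `0` interior to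
`supp f_s`, then `supp L_s f_s ⊆ (M+s)⁻¹ · closure (supp L_∞ f)`. -/
theorem support_sPolar_subset (d : ℕ)
    (f : EuclideanSpace ℝ (Fin d) → ℝ) (hf : ∀ x, 0 ≤ f x)
    (hlsc : LowerSemicontinuous f)
    (hlc : ∀ x y : EuclideanSpace ℝ (Fin d), ∀ t ∈ Set.Icc (0 : ℝ) 1,
      f x ^ (1 - t) * f y ^ t ≤ f ((1 - t) • x + t • y))
    (hint : Integrable f)
    (h0 : 0 < f 0)
    (M : ℝ) (hM : IsLeast (Set.range fun y => -Real.log (polarT f y)) M)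
    (s : ℝ)
    (h0s : (0 : EuclideanSpace ℝ (Fin d)) ∈ interior (Function.support (sApprox s f)))
    (hsM : 0 < s + M) :
    Function.support (sPolar s (sApprox s f)) ⊆
      (M + s)⁻¹ • closure (Function.support (polarT f)) := by
  have hMs : (0:ℝ) < M + s := by linarith
  have hNE : Nonempty {x : EuclideanSpace ℝ (Fin d) // 0 < f x} := ⟨⟨0, h0⟩⟩
  intro y hy
  suffices hz : (M + s) • y ∈ closure (Function.support (polarT f)) by
    have hyy : y = (M + s)⁻¹ • ((M + s) • y) := (inv_smul_smul₀ hMs.ne' y).symm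
    rw [hyy]
    exact smul_mem_smul_set hz
  by_cases hK : ∀ w : EuclideanSpace ℝ (Fin d), polarT f w ≠ 0
  · have hsupp : Function.support (polarT f) = univ := by
      ext w; simp [Function.mem_support, hK w]
    rw [hsupp, closure_univ]; trivial
  push_neg at hK
  obtain ⟨w₀, hw₀⟩ := hK
  have hM0 : M ≤ 0 := by
    have h := hM.2 (Set.mem_range_self w₀)
    rw [hw₀, Real.log_zero, neg_zero] at h
    exact h
  have hs : 0 < s := by linarith
  set ψ0 : ℝ := -Real.log (f 0) with hψ0def
  have h0supp : sApprox s f 0 ≠ 0 := Function.mem_support.1 (interior_subset h0s)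
  have hψ0s : ψ0 < s := by
    by_contra hcon
    push_neg at hcon
    apply h0supp
    have h1 : Real.log (f 0) / s ≤ -1 := by
      rw [div_le_iff₀ hs]
      have : Real.log (f 0) ≤ -s := by rw [hψ0def] at hcon; linarith
      linarith
    have h2 : 1 + Real.log (f 0) / s ≤ 0 := by linarith
    unfold sApprox
    rw [max_eq_right h2, Real.zero_rpow hs.ne']
  have hfsnn : ∀ x, 0 ≤ sApprox s f x := fun x => Real.rpow_nonneg (le_max_right _ _) _
  have hcnonneg : 0 ≤ sPolar s (sApprox s f) y := by
    apply Real.iInf_nonneg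
    intro x
    exact div_nonneg (Real.rpow_nonneg (le_max_right _ _) _) (hfsnn _)
  have hcpos : 0 < sPolar s (sApprox s f) y :=
    lt_of_le_of_ne hcnonneg (Ne.symm (Function.mem_support.1 hy))
  set c : ℝ := sPolar s (sApprox s f) y with hcdef
  set c' : ℝ := c ^ ((1:ℝ)/s) with hc'def
  have hc'pos : 0 < c' := Real.rpow_pos_of_pos hcpos _
  -- the key consequence of y ∈ supp (L_s f_s)
  have hkey : ∀ x : EuclideanSpace ℝ (Fin d), 0 < f x → -Real.log (f x) < s →
      c' * (1 - (-Real.log (f x))/s) ≤ 1 - (inner ℝ x y : ℝ) := by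
    intro x hfx hpx
    have hbase : (0:ℝ) < 1 + Real.log (f x) / s := by
      have h1 : -Real.log (f x) / s < 1 := (div_lt_one hs).2 hpx
      rw [neg_div] at h1
      linarith
    have hfsx : sApprox s f x = (1 + Real.log (f x) / s) ^ s := by
      unfold sApprox; rw [max_eq_left hbase.le]
    have hfsxpos : 0 < sApprox s f x := by
      rw [hfsx]; exact Real.rpow_pos_of_pos hbase _
    have hbdd : BddBelow (Set.range fun x : {x : EuclideanSpace ℝ (Fin d) // 0 < sApprox s f x} =>
        max (1 - (inner ℝ (x : EuclideanSpace ℝ (Fin d)) y : ℝ)) 0 ^ s / sApprox s f x) := by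
      refine ⟨0, ?_⟩
      rintro v ⟨x', rfl⟩
      exact div_nonneg (Real.rpow_nonneg (le_max_right _ _) _) (hfsnn _)
    have hle : c ≤ max (1 - (inner ℝ x y : ℝ)) 0 ^ s / sApprox s f x :=
      ciInf_le hbdd ⟨x, hfsxpos⟩
    rw [hfsx, le_div_iff₀ (Real.rpow_pos_of_pos hbase _)] at hle
    have h7 := Real.rpow_le_rpow (by positivity) hle (by positivity : (0:ℝ) ≤ 1/s)
    rw [Real.mul_rpow hcpos.le (Real.rpow_nonneg hbase.le _), ← Real.rpow_mul hbase.le,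
      mul_one_div_cancel hs.ne', Real.rpow_one, ← Real.rpow_mul (le_max_right _ _),
      mul_one_div_cancel hs.ne', Real.rpow_one] at h7
    have hmaxpos : 0 < c' * (1 + Real.log (f x)/s) := by positivity
    rcases le_or_gt (1 - (inner ℝ x y : ℝ)) 0 with hneg | hposxy
    · exfalso
      rw [max_eq_right hneg] at h7
      have h30 := lt_of_lt_of_le hmaxpos h7
      exact absurd h30 (lt_irrefl 0)
    · rw [max_eq_left hposxy.le] at h7
      calc c' * (1 - (-Real.log (f x))/s) = c' * (1 + Real.log (f x)/s) := by ring
        _ ≤ 1 - inner ℝ x y := h7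
  -- M ≤ log f 0
  have hMψ : M ≤ Real.log (f 0) := by
    refine le_of_forall_pos_le_add fun ε hε => ?_
    obtain ⟨w, hw⟩ := exists_eps_subgradient f hlsc hlc h0 hε
    have hpol : Real.exp (-(Real.log (f 0) + ε)) ≤ polarT f w := by
      apply le_ciInf
      rintro ⟨x, hx⟩
      calc Real.exp (-(Real.log (f 0) + ε))
          ≤ Real.exp (-(inner ℝ x w : ℝ) - Real.log (f x)) := by
            apply Real.exp_le_exp.2
            have h1 := hw x hx
            linarith
        _ = Real.exp (-(inner ℝ x w : ℝ)) / f x := by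
            rw [Real.exp_sub, Real.exp_log hx]
    have hlog := Real.log_le_log (Real.exp_pos _) hpol
    rw [Real.log_exp] at hlog
    have h2 := hM.2 (Set.mem_range_self w)
    linarith
  obtain ⟨C, hC1, hCb⟩ := logconcave_bounded f hf hlsc hlc hint h0
  set L : ℝ := |Real.log C| with hLdef
  have hLnn : 0 ≤ L := abs_nonneg _
  have hL : ∀ x, 0 < f x → -L ≤ -Real.log (f x) := by
    intro x hx
    have h1 : Real.log (f x) ≤ Real.log C := Real.log_le_log hx (hCb x)
    have h2 : Real.log C ≤ L := le_abs_self _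
    linarith
  -- main step : every positive multiple lam < M + s of y is in the support of polarT f
  have hlam : ∀ lam : ℝ, 0 < lam → lam < M + s →
      lam • y ∈ Function.support (polarT f) := by
    intro lam hl0 hls
    have hlam2 : lam < s - ψ0 := by rw [hψ0def]; linarith
    set c₁ : ℝ := min c' 1 with hc₁def
    have hc₁pos : 0 < c₁ := lt_min hc'pos one_pos
    have hc₁le : c₁ ≤ 1 := min_le_right _ _
    have hc₁le' : c₁ ≤ c' := min_le_left _ _
    set η : ℝ := min ((s - ψ0 - lam)/2) (s/2) with hηdef
    have hηpos : 0 < η := lt_min (by linarith) (by linarith)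
    have hη1 : 2*η ≤ s - ψ0 - lam := by
      have := min_le_left ((s - ψ0 - lam)/2) (s/2)
      rw [← hηdef] at this
      linarith
    have hη2 : η ≤ s/2 := min_le_right _ _
    have hmain : lam * (1 - c₁*η/s) ≤ s - ψ0 - η := by
      have h1 : 0 ≤ c₁*η/s := by positivity
      have h2 : lam * (1 - c₁*η/s) ≤ lam * 1 := mul_le_mul_of_nonneg_left (by linarith) hl0.le
      rw [mul_one] at h2
      linarith
    set B : ℝ := lam * (1 + c') + (L + s) * (|lam * c'/s - 1| + 1) + |ψ0| + 1 with hBdef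
    have hclaim : ∀ x : EuclideanSpace ℝ (Fin d), 0 < f x →
        lam * (inner ℝ x y : ℝ) ≤ -Real.log (f x) + B := by
      intro x hfx
      set p : ℝ := -Real.log (f x) with hpdef
      have hpl : -L ≤ p := hL x hfx
      by_cases hps : p < s
      · -- region 1
        have h9 := hkey x hfx (by linarith : -Real.log (f x) < s)
        rw [← hpdef] at h9
        have e9 : c' * (1 - p/s) = c' - c' * (p/s) := by ring
        have h10 : (inner ℝ x y : ℝ) ≤ 1 - c' + c' * (p/s) := by linarith
        have h11 : lam * (inner ℝ x y : ℝ) ≤ lam * (1 - c' + c' * (p/s)) :=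
          mul_le_mul_of_nonneg_left h10 hl0.le
        have h12 : lam * (1 - c' + c' * (p/s)) = lam * (1-c') + (lam * c'/s - 1) * p + p := by
          field_simp; ring
        have h13 : (lam * c'/s - 1) * p ≤ |lam * c'/s - 1| * (L + s) := by
          calc (lam * c'/s - 1) * p ≤ |(lam * c'/s - 1) * p| := le_abs_self _
            _ = |lam * c'/s - 1| * |p| := abs_mul _ _
            _ ≤ |lam * c'/s - 1| * (L + s) := by
                refine mul_le_mul_of_nonneg_left ?_ (abs_nonneg _)
                rw [abs_le]
                constructor
                · linarith
                · linarith
        have h14 : lam * (1 - c') ≤ lam * (1 + c') :=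
          mul_le_mul_of_nonneg_left (by linarith) hl0.le
        have hBnn : |ψ0| + 1 > 0 := by positivity
        have habs1 : |lam * c'/s - 1| ≤ |lam * c'/s - 1| + 1 := by linarith
        have h15 : |lam * c'/s - 1| * (L + s) ≤ (L + s) * (|lam * c'/s - 1| + 1) := by
          rw [mul_comm]
          exact mul_le_mul_of_nonneg_left habs1 (by linarith)
        rw [hBdef]
        linarith [h11, h12.le, h12.ge, h13, h14]
      · -- region 2
        push_neg at hps
        have hpψ : 0 < p - ψ0 := by linarith
        have hsψη : 0 < s - ψ0 - η := by linarith
        set t : ℝ := (s - ψ0 - η)/(p - ψ0) with htdef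
        have htpos : 0 < t := div_pos hsψη hpψ
        have htle : t ≤ 1 := by
          rw [htdef, div_le_one hpψ]; linarith
        have hts : t * (p - ψ0) = s - ψ0 - η := div_mul_cancel₀ _ hpψ.ne'
        have hcomb := hlc 0 x t ⟨htpos.le, htle⟩
        rw [smul_zero, zero_add] at hcomb
        have hprodpos : (0:ℝ) < f 0 ^ (1-t) * f x ^ t :=
          mul_pos (Real.rpow_pos_of_pos h0 _) (Real.rpow_pos_of_pos hfx _)
        have hftpos : 0 < f (t • x) := lt_of_lt_of_le hprodpos hcomb
        have hψt : -Real.log (f (t • x)) ≤ s - η := by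
          have hl1 := Real.log_le_log hprodpos hcomb
          rw [Real.log_mul (Real.rpow_pos_of_pos h0 _).ne' (Real.rpow_pos_of_pos hfx _).ne',
            Real.log_rpow h0, Real.log_rpow hfx] at hl1
          have heq : (1-t)*Real.log (f 0) + t * Real.log (f x) = -(s - η) := by
            have e1 : Real.log (f 0) = -ψ0 := by rw [hψ0def]; ring
            have e2 : Real.log (f x) = -p := by rw [hpdef]; ring
            rw [e1, e2]
            linear_combination (-1 : ℝ) * hts
          linarith
        have hψts : -Real.log (f (t • x)) < s := by linarith
        have h20 := hkey (t • x) hftpos hψts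
        have hq : η/s ≤ (1 : ℝ) - (-Real.log (f (t • x)))/s := by
          have h1 : (-Real.log (f (t•x)))/s ≤ (s-η)/s := (div_le_div_iff_of_pos_right hs).2 hψt
          have h2 : (s-η)/s = 1 - η/s := by rw [sub_div, div_self hs.ne']
          linarith
        have h21 : c₁ * (η/s) ≤ 1 - (inner ℝ (t • x) y : ℝ) := by
          calc c₁ * (η/s) ≤ c' * (1 - (-Real.log (f (t•x)))/s) :=
                mul_le_mul hc₁le' hq (by positivity) hc'pos.le
            _ ≤ _ := h20
        rw [real_inner_smul_left] at h21
        have h21' : c₁ * η / s = c₁ * (η/s) := by ring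
        have h22 : t * (inner ℝ x y : ℝ) ≤ 1 - c₁*η/s := by
          rw [h21']; linarith
        have hfact : lam * (p-ψ0)/(s-ψ0-η) * t = lam := by
          rw [htdef]; field_simp
        have h23 : lam * (inner ℝ x y : ℝ) ≤ lam * (p-ψ0)/(s-ψ0-η) * (1 - c₁*η/s) := by
          have h2 := mul_le_mul_of_nonneg_left h22 (by positivity : (0:ℝ) ≤ lam * (p-ψ0)/(s-ψ0-η))
          calc lam * (inner ℝ x y:ℝ) = lam * (p-ψ0)/(s-ψ0-η) * (t * (inner ℝ x y : ℝ)) := by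
                rw [← mul_assoc, hfact]
            _ ≤ _ := h2
        have h24 : lam * (p-ψ0)/(s-ψ0-η) * (1 - c₁*η/s) ≤ p - ψ0 := by
          rw [div_mul_eq_mul_div, div_le_iff₀ hsψη]
          have h24' := mul_le_mul_of_nonneg_left hmain hpψ.le
          have e24 : lam * (p-ψ0) * (1 - c₁*η/s) = (p-ψ0) * (lam * (1 - c₁*η/s)) := by ring
          rw [e24]
          exact h24'
        have h25 : -ψ0 ≤ |ψ0| := neg_le_abs _
        have hBge : |ψ0| ≤ B := by
          rw [hBdef]
          have hb1 : 0 < lam * (1 + c') := mul_pos hl0 (by linarith)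
          have hb2 : 0 ≤ (L + s) * (|lam * c'/s - 1| + 1) :=
            mul_nonneg (by linarith) (by linarith [abs_nonneg (lam * c'/s - 1)])
          linarith
        linarith [h23, h24]
    -- conclude : polarT f (lam • y) > 0
    have hpolge : Real.exp (-B) ≤ polarT f (lam • y) := by
      apply le_ciInf
      rintro ⟨x, hx⟩
      calc Real.exp (-B)
          ≤ Real.exp (-(inner ℝ x (lam • y) : ℝ) - Real.log (f x)) := by
            apply Real.exp_le_exp.2
            have h26 := hclaim x hx
            rw [real_inner_smul_right]
            linarith
        _ = Real.exp (-(inner ℝ x (lam • y) : ℝ)) / f x := by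
            rw [Real.exp_sub, Real.exp_log hx]
    exact Function.mem_support.2 (ne_of_gt (lt_of_lt_of_le (Real.exp_pos _) hpolge))
  -- pass to the closure along a sequence
  have htend : Filter.Tendsto (fun n : ℕ => ((M+s) - 1/(n+1)) • y)
      Filter.atTop (𝓝 ((M+s) • y)) := by
    have h1 : Filter.Tendsto (fun n : ℕ => (M+s) - 1/((n:ℝ)+1)) Filter.atTop (𝓝 ((M+s) - 0)) :=
      Filter.Tendsto.const_sub _ tendsto_one_div_add_atTop_nhds_zero_nat
    rw [sub_zero] at h1
    exact h1.smul_const y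
  refine mem_closure_of_tendsto htend ?_
  obtain ⟨N, hN⟩ := exists_nat_one_div_lt hMs
  refine Filter.eventually_atTop.2 ⟨N, fun n hn => ?_⟩
  have hlt : 1/((n:ℝ)+1) ≤ 1/((N:ℝ)+1) := by
    apply one_div_le_one_div_of_le (by positivity)
    have : (N:ℝ) ≤ (n:ℝ) := by exact_mod_cast hn
    linarith
  have hposn : 0 < 1/((n:ℝ)+1) := by positivity
  exact hlam _ (by linarith) (by linarith)
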